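/- Let Φ : Q → Q be a measure preserving homeomorphism of the unit cube Q = [0,1]^n that is approximately differentiable almost everywhere. Then |det ap DΦ(x)| = 1 for almost every x ∈ Q. -/

import Mathlib

open MeasureTheory Metric Set Filter Topology
open scoped ENNReal NNReal

set_option maxHeartbeats 1000000

noncomputable section

abbrev Euc (n : ℕ) := EuclideanSpace ℝ (Fin n)

def unitCube (n : ℕ) : Set (Euc n) := {x | ∀ i, x i ∈ Set.Icc (0:ℝ) 1}

/-- `x` is a density point of `S`. -/
def DensityPt {n : ℕ} (S : Set (Euc n)) (x : Euc n) : Prop :=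
  Tendsto (fun ρ : ℝ => volume (S ∩ ball x ρ) / volume (ball x ρ)) (𝓝[>] 0) (𝓝 1)

/-- `f` has approximate derivative `L` at `x`. -/
def HasApproxDerivAt {n : ℕ} (f : Euc n → Euc n) (L : Euc n →L[ℝ] Euc n) (x : Euc n) : Prop :=
  ∃ S : Set (Euc n), MeasurableSet S ∧ DensityPt S x ∧
    Tendsto (fun y => ‖f y - f x - L (y - x)‖ / ‖y - x‖) (𝓝[S \ {x}] x) (𝓝 0)

/-! ### auxiliary facts about the cube -/

lemma isClosed_unitCube (n : ℕ) : IsClosed (unitCube n) := by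
  have : unitCube n = ⋂ i, (EuclideanSpace.proj (𝕜 := ℝ) i) ⁻¹' (Set.Icc (0:ℝ) 1) := by
    ext x
    simp only [unitCube, mem_setOf_eq, mem_iInter, mem_preimage]
    rfl
  rw [this]
  exact isClosed_iInter fun i => IsClosed.preimage (EuclideanSpace.proj i).continuous isClosed_Icc

lemma measurableSet_unitCube (n : ℕ) : MeasurableSet (unitCube n) :=
  (isClosed_unitCube n).measurableSet

lemma convex_unitCube (n : ℕ) : Convex ℝ (unitCube n) := by
  intro x hx y hy a b ha hb hab
  intro i
  have : (a • x + b • y) i = a * x i + b * y i := by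
    simp [PiLp.add_apply, PiLp.smul_apply, smul_eq_mul]
  rw [this]
  exact (convex_Icc (0:ℝ) 1) (hx i) (hy i) ha hb hab

lemma volume_unitCube_lt_top (n : ℕ) : volume (unitCube n) < ∞ := by
  have hsub : unitCube n ⊆ closedBall (0 : Euc n) (Real.sqrt n) := by
    intro x hx
    rw [mem_closedBall, dist_eq_norm, sub_zero]
    have : ‖x‖ = Real.sqrt (∑ i, ‖x i‖ ^ 2) := by
      simpa using EuclideanSpace.norm_eq x
    rw [this]
    apply Real.sqrt_le_sqrt
    calc (∑ i, ‖x i‖ ^ 2) ≤ ∑ _i : Fin n, (1:ℝ) := by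
          apply Finset.sum_le_sum
          intro i _
          have h1 := (hx i).1; have h2 := (hx i).2
          have : |x i| ≤ 1 := abs_le.2 ⟨by linarith, h2⟩
          calc ‖x i‖ ^ 2 = |x i| ^ 2 := by rw [Real.norm_eq_abs]
            _ ≤ 1 ^ 2 := by
                apply pow_le_pow_left₀ (abs_nonneg _) this
            _ = 1 := one_pow 2
      _ = (n : ℝ) := by simp
  exact lt_of_le_of_lt (measure_mono hsub) measure_closedBall_lt_top

lemma null_cube_minus_interior (n : ℕ) :
    volume (unitCube n \ interior (unitCube n)) = 0 := by
  have h : unitCube n \ interior (unitCube n) ⊆ frontier (unitCube n) := by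
    intro x hx
    exact ⟨subset_closure hx.1, hx.2⟩
  exact measure_mono_null h ((convex_unitCube n).addHaar_frontier volume)

/-! ### The modified map and the good sets -/

def phiB (n : ℕ) (Φ : Euc n → Euc n) : Euc n → Euc n :=
  haveI : ∀ j : Euc n, Decidable (j ∈ unitCube n) := fun _ => Classical.propDecidable _
  (unitCube n).piecewise Φ (fun _ => 0)

lemma phiB_eq_on (n : ℕ) (Φ : Euc n → Euc n) {x : Euc n} (hx : x ∈ unitCube n) :
    phiB n Φ x = Φ x := by
  classical
  simp only [phiB]
  rw [Set.piecewise_eq_of_mem]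
  exact hx

lemma measurable_phiB (n : ℕ) (Φ : Euc n → Euc n) (hΦ : ContinuousOn Φ (unitCube n)) :
    Measurable (phiB n Φ) := by
  classical
  simp only [phiB]
  have := ContinuousOn.measurable_piecewise (g := fun _ => (0 : Euc n))
    hΦ continuousOn_const (measurableSet_unitCube n)
  convert this using 2

/-- the set of "bad" points relative to base point `x`. -/
def badS (n : ℕ) (Φ : Euc n → Euc n) (A : Euc n →L[ℝ] Euc n) (δ : ℝ) (x : Euc n) :
    Set (Euc n) :=
  {y | δ * ‖y - x‖ < ‖phiB n Φ y - phiB n Φ x - A (y - x)‖}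

def GSet (n : ℕ) (Φ : Euc n → Euc n) (A : Euc n →L[ℝ] Euc n) (δ r : ℝ) : Set (Euc n) :=
  {x | ∀ ρ : ℚ, 0 < (ρ:ℝ) → (ρ:ℝ) ≤ r →
    volume (badS n Φ A δ x ∩ ball x (ρ:ℝ)) ≤ ENNReal.ofReal δ * volume (ball x (ρ:ℝ))}

lemma measurableSet_GSet (n : ℕ) (Φ : Euc n → Euc n) (hΦ : Measurable (phiB n Φ))
    (A : Euc n →L[ℝ] Euc n) (δ r : ℝ) : MeasurableSet (GSet n Φ A δ r) := by
  have key : ∀ ρ : ℝ, Measurable (fun x => volume (badS n Φ A δ x ∩ ball x ρ)) := by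
    intro ρ
    have h1 : MeasurableSet {p : Euc n × Euc n |
        δ * ‖p.2 - p.1‖ < ‖phiB n Φ p.2 - phiB n Φ p.1 - A (p.2 - p.1)‖} := by
      have hg : Measurable (fun p : Euc n × Euc n =>
          ‖phiB n Φ p.2 - phiB n Φ p.1 - A (p.2 - p.1)‖ - δ * ‖p.2 - p.1‖) := by
        apply Measurable.sub
        · exact (((hΦ.comp measurable_snd).sub (hΦ.comp measurable_fst)).sub
            (A.continuous.measurable.comp (measurable_snd.sub measurable_fst))).norm
        · exact (measurable_snd.sub measurable_fst).norm.const_mul δ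
      have heq : {p : Euc n × Euc n |
          δ * ‖p.2 - p.1‖ < ‖phiB n Φ p.2 - phiB n Φ p.1 - A (p.2 - p.1)‖} =
          (fun p : Euc n × Euc n =>
            ‖phiB n Φ p.2 - phiB n Φ p.1 - A (p.2 - p.1)‖ - δ * ‖p.2 - p.1‖) ⁻¹'
            (Set.Ioi 0) := by
        ext p
        simp only [mem_setOf_eq, mem_preimage, mem_Ioi, sub_pos]
      rw [heq]
      exact hg measurableSet_Ioi
    have h2 : MeasurableSet {p : Euc n × Euc n | dist p.2 p.1 < ρ} := by
      have heq : {p : Euc n × Euc n | dist p.2 p.1 < ρ} =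
          (fun p : Euc n × Euc n => dist p.2 p.1) ⁻¹' (Set.Iio ρ) := rfl
      rw [heq]
      exact (measurable_snd.dist measurable_fst) measurableSet_Iio
    have hW : MeasurableSet ({p : Euc n × Euc n |
        δ * ‖p.2 - p.1‖ < ‖phiB n Φ p.2 - phiB n Φ p.1 - A (p.2 - p.1)‖} ∩
        {p : Euc n × Euc n | dist p.2 p.1 < ρ}) := h1.inter h2
    have hmeas := measurable_measure_prodMk_left (ν := (volume : Measure (Euc n))) hW
    have : (fun x => volume (badS n Φ A δ x ∩ ball x ρ)) = fun x =>
        volume (Prod.mk x ⁻¹' ({p : Euc n × Euc n |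
          δ * ‖p.2 - p.1‖ < ‖phiB n Φ p.2 - phiB n Φ p.1 - A (p.2 - p.1)‖} ∩
          {p : Euc n × Euc n | dist p.2 p.1 < ρ})) := by
      funext x
      congr 1
    rw [this]
    exact hmeas
  have hGeq : GSet n Φ A δ r = ⋂ (ρ : ℚ), ⋂ (_ : 0 < (ρ:ℝ)), ⋂ (_ : (ρ:ℝ) ≤ r),
      {x | volume (badS n Φ A δ x ∩ ball x (ρ:ℝ)) ≤
        ENNReal.ofReal δ * volume (ball (0 : Euc n) (ρ:ℝ))} := by
    ext x
    simp only [GSet, mem_setOf_eq, mem_iInter]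
    constructor
    · intro h ρ h1 h2
      rw [← Measure.addHaar_ball_center volume x ((ρ:ℝ))]
      exact h ρ h1 h2
    · intro h ρ h1 h2
      rw [Measure.addHaar_ball_center volume x ((ρ:ℝ))]
      exact h ρ h1 h2
  rw [hGeq]
  refine MeasurableSet.iInter fun ρ => MeasurableSet.iInter fun h1 =>
    MeasurableSet.iInter fun h2 => ?_
  exact (key (ρ:ℝ)) measurableSet_Iic

/-! ### Coverage: an approximate differentiability point lies in some good set -/

lemma mem_GSet_of_approx {n : ℕ} {Φ : Euc n → Euc n} {x : Euc n} {L : Euc n →L[ℝ] Euc n}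
    (hx : HasApproxDerivAt Φ L x) {r0 : ℝ} (hr0 : 0 < r0) (hball : ball x r0 ⊆ unitCube n)
    (A : Euc n →L[ℝ] Euc n) {δ : ℝ} (hδ : 0 < δ) (hδ1 : δ ≤ 1) (hA : ‖A - L‖ < δ / 2) :
    ∃ r : ℚ, 0 < (r:ℝ) ∧ x ∈ GSet n Φ A δ r := by
  obtain ⟨S, Smeas, Sdens, Stend⟩ := hx
  -- radius where the difference quotient is < δ/2 on S
  have h1 : ∀ᶠ y in 𝓝[S \ {x}] x, ‖Φ y - Φ x - L (y - x)‖ / ‖y - x‖ < δ / 2 := by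
    have := Stend (Iio_mem_nhds (show (0:ℝ) < δ / 2 by linarith))
    filter_upwards [this] with y hy using hy
  rw [eventually_nhdsWithin_iff] at h1
  obtain ⟨r1, hr1, hball1⟩ := Metric.eventually_nhds_iff_ball.1 h1
  -- radius where the density is large
  have h2 : ∀ᶠ ρ in 𝓝[>] (0:ℝ),
      volume (ball x ρ \ S) ≤ ENNReal.ofReal δ * volume (ball x ρ) := by
    have hlt : (1 : ℝ≥0∞) - ENNReal.ofReal δ < 1 :=
      ENNReal.sub_lt_self ENNReal.one_ne_top one_ne_zero (by simpa using hδ)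
    have hmem : Set.Ioi ((1 : ℝ≥0∞) - ENNReal.ofReal δ) ∈ 𝓝 (1 : ℝ≥0∞) :=
      Ioi_mem_nhds hlt
    filter_upwards [Sdens hmem, self_mem_nhdsWithin] with ρ hρ hρpos
    have hρpos' : (0:ℝ) < ρ := hρpos
    have hB0 : volume (ball x ρ) ≠ 0 := (measure_ball_pos volume x hρpos').ne'
    have hBt : volume (ball x ρ) ≠ ∞ := measure_ball_lt_top.ne
    have hdiv : (1 : ℝ≥0∞) - ENNReal.ofReal δ < volume (S ∩ ball x ρ) / volume (ball x ρ) := hρ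
    have hmul : ((1 : ℝ≥0∞) - ENNReal.ofReal δ) * volume (ball x ρ) ≤ volume (S ∩ ball x ρ) :=
      ((ENNReal.lt_div_iff_mul_lt (Or.inl hB0) (Or.inl hBt)).1 hdiv).le
    have hdiff : volume (ball x ρ \ S) = volume (ball x ρ) - volume (S ∩ ball x ρ) := by
      have : ball x ρ \ S = ball x ρ \ (S ∩ ball x ρ) := by
        ext y; simp only [mem_diff, mem_inter_iff]; tauto
      rw [this]
      refine measure_diff inter_subset_right (Smeas.inter measurableSet_ball).nullMeasurableSet ?_
      exact (lt_of_le_of_lt (measure_mono inter_subset_right) measure_ball_lt_top).ne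
    rw [hdiff]
    calc volume (ball x ρ) - volume (S ∩ ball x ρ)
        ≤ volume (ball x ρ) - ((1 : ℝ≥0∞) - ENNReal.ofReal δ) * volume (ball x ρ) :=
          tsub_le_tsub_left hmul _
      _ ≤ ENNReal.ofReal δ * volume (ball x ρ) := by
          have hle : ENNReal.ofReal δ ≤ 1 := by
            simpa using ENNReal.ofReal_le_ofReal hδ1
          rw [tsub_le_iff_left, ← add_mul]
          conv_lhs => rw [← one_mul (volume (ball x ρ))]
          apply mul_le_mul_left
          rw [tsub_add_cancel_of_le hle]
  obtain ⟨r2, hr2mem, hr2⟩ := mem_nhdsGT_iff_exists_Ioo_subset.1 h2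
  have hr2pos : (0:ℝ) < r2 := hr2mem
  set R := min r0 (min r1 r2) with hR
  have hRpos : 0 < R := lt_min hr0 (lt_min hr1 hr2pos)
  obtain ⟨r, hrpos, hrR⟩ := exists_rat_btwn (show (0:ℝ) < R / 2 by linarith)
  refine ⟨r, hrpos, ?_⟩
  intro ρ hρpos hρr
  have hρR : (ρ:ℝ) < R := by
    have : (ρ:ℝ) ≤ (r:ℝ) := hρr
    linarith [hrR]
  -- bad points in the ball avoid S
  have hsub : badS n Φ A δ x ∩ ball x (ρ:ℝ) ⊆ ball x (ρ:ℝ) \ S := by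
    rintro y ⟨hybad, hyball⟩
    refine ⟨hyball, fun hyS => ?_⟩
    have hyx : y ≠ x := by
      rintro rfl
      simp only [badS, mem_setOf_eq, sub_self, norm_zero, mul_zero, map_zero] at hybad
      simp at hybad
    have hyQ : y ∈ unitCube n := hball (by
      exact mem_of_mem_of_subset hyball (ball_subset_ball (by
        have : (ρ:ℝ) < r0 := lt_of_lt_of_le hρR (min_le_left _ _); linarith)))
    have hxQ : x ∈ unitCube n := hball (mem_ball_self hr0)
    have hy1 : y ∈ ball x r1 := by
      apply ball_subset_ball _ hyball
      exact le_of_lt (lt_of_lt_of_le hρR (le_trans (min_le_right _ _) (min_le_left _ _)))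
    have hq := hball1 y hy1 ⟨hyS, hyx⟩
    have hnorm : (0:ℝ) < ‖y - x‖ := by
      rw [norm_pos_iff]; exact sub_ne_zero.2 hyx
    have hL : ‖Φ y - Φ x - L (y - x)‖ < δ / 2 * ‖y - x‖ := by
      rw [div_lt_iff₀ hnorm] at hq
      linarith [hq]
    have hAL : ‖A (y - x) - L (y - x)‖ ≤ ‖A - L‖ * ‖y - x‖ := by
      have h := (A - L).le_opNorm (y - x)
      rwa [ContinuousLinearMap.sub_apply] at h
    have : ‖phiB n Φ y - phiB n Φ x - A (y - x)‖ < δ * ‖y - x‖ := by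
      rw [phiB_eq_on n Φ hyQ, phiB_eq_on n Φ hxQ]
      have harg : Φ y - Φ x - A (y - x) = (Φ y - Φ x - L (y - x)) - (A (y - x) - L (y - x)) := by
        abel
      calc ‖Φ y - Φ x - A (y - x)‖
          = ‖(Φ y - Φ x - L (y - x)) - (A (y - x) - L (y - x))‖ := by rw [harg]
        _ ≤ ‖Φ y - Φ x - L (y - x)‖ + ‖A (y - x) - L (y - x)‖ := norm_sub_le _ _
        _ ≤ ‖Φ y - Φ x - L (y - x)‖ + ‖A - L‖ * ‖y - x‖ := by linarith
        _ < δ / 2 * ‖y - x‖ + δ / 2 * ‖y - x‖ := by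
            have : ‖A - L‖ * ‖y - x‖ < δ / 2 * ‖y - x‖ :=
              mul_lt_mul_of_pos_right hA hnorm
            linarith
        _ = δ * ‖y - x‖ := by ring
    exact absurd hybad (by simp only [badS, mem_setOf_eq]; linarith)
  calc volume (badS n Φ A δ x ∩ ball x (ρ:ℝ)) ≤ volume (ball x (ρ:ℝ) \ S) :=
        measure_mono hsub
    _ ≤ ENNReal.ofReal δ * volume (ball x (ρ:ℝ)) := by
        apply hr2
        constructor
        · exact hρpos
        · exact lt_of_lt_of_le hρR (le_trans (min_le_right _ _) (min_le_right _ _))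

/-! ### Good sets give linear approximation -/

lemma approxOn_GSet {n : ℕ} (hn : 0 < n) (Φ : Euc n → Euc n) (A : Euc n →L[ℝ] Euc n)
    {δ : ℝ} (hδ : 0 < δ) (hδsmall : δ * ((3:ℝ)^n + 2^n) < 1) {r : ℝ} (hr : 0 < r) (c : Euc n) :
    ApproximatesLinearOn (phiB n Φ) A (GSet n Φ A δ r ∩ ball c (r/8)) (Real.toNNReal (3*δ)) := by
  haveI : Nonempty (Fin n) := ⟨⟨0, hn⟩⟩
  haveI : Nontrivial (Euc n) :=
    inferInstanceAs (Nontrivial (PiLp 2 (fun _ : Fin n => ℝ)))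
  intro y hy x hx
  rcases eq_or_ne y x with rfl | hyx
  · simp
  set d : ℝ := dist y x with hd
  have hdpos : 0 < d := dist_pos.2 hyx
  have hdr : d < r / 4 := by
    have h1 : dist y c < r/8 := hy.2
    have h2 : dist x c < r/8 := hx.2
    calc d ≤ dist y c + dist c x := dist_triangle y c x
      _ < r/8 + r/8 := by rw [dist_comm c x]; linarith
      _ = r / 4 := by ring
  obtain ⟨ρ₁, hρ₁l, hρ₁u⟩ := exists_rat_btwn (show 2*d < min (3*d) r by
    apply lt_min (by linarith) (by linarith))
  obtain ⟨ρ₂, hρ₂l, hρ₂u⟩ := exists_rat_btwn (show d < min (2*d) r by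
    apply lt_min (by linarith) (by linarith))
  have hρ₁pos : (0:ℝ) < ρ₁ := by linarith
  have hρ₂pos : (0:ℝ) < ρ₂ := by linarith
  have hρ₁r : (ρ₁:ℝ) ≤ r := le_of_lt (lt_of_lt_of_le hρ₁u (min_le_right _ _))
  have hρ₂r : (ρ₂:ℝ) ≤ r := le_of_lt (lt_of_lt_of_le hρ₂u (min_le_right _ _))
  have hρ₁3d : (ρ₁:ℝ) ≤ 3*d := le_of_lt (lt_of_lt_of_le hρ₁u (min_le_left _ _))
  have hρ₂2d : (ρ₂:ℝ) ≤ 2*d := le_of_lt (lt_of_lt_of_le hρ₂u (min_le_left _ _))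
  set μ1 := volume (ball (0 : Euc n) 1) with hμ1
  have hμ1pos : μ1 ≠ 0 := (measure_ball_pos volume _ one_pos).ne'
  have hμ1top : μ1 ≠ ∞ := measure_ball_lt_top.ne
  have hballvol : ∀ (z : Euc n) (t : ℝ), 0 ≤ t →
      volume (ball z t) = ENNReal.ofReal (t ^ n) * μ1 := by
    intro z t ht
    rw [Measure.addHaar_ball volume z ht]
    congr 2
    simp [finrank_euclideanSpace_fin]
  set Bx := badS n Φ A δ x ∩ ball x (ρ₁:ℝ) with hBx
  set By := badS n Φ A δ y ∩ ball y (ρ₂:ℝ) with hBy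
  have hBxvol : volume Bx ≤ ENNReal.ofReal (δ * (3*d)^n) * μ1 := by
    calc volume Bx ≤ ENNReal.ofReal δ * volume (ball x (ρ₁:ℝ)) :=
          hx.1 ρ₁ hρ₁pos hρ₁r
      _ = ENNReal.ofReal δ * (ENNReal.ofReal ((ρ₁:ℝ) ^ n) * μ1) := by
          rw [hballvol x _ (le_of_lt hρ₁pos)]
      _ ≤ ENNReal.ofReal (δ * (3*d)^n) * μ1 := by
          rw [← mul_assoc, ← ENNReal.ofReal_mul (le_of_lt hδ)]
          apply mul_le_mul_left
          apply ENNReal.ofReal_le_ofReal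
          have : (ρ₁:ℝ)^n ≤ (3*d)^n := pow_le_pow_left₀ (le_of_lt hρ₁pos) hρ₁3d n
          nlinarith [le_of_lt hδ]
  have hByvol : volume By ≤ ENNReal.ofReal (δ * (2*d)^n) * μ1 := by
    calc volume By ≤ ENNReal.ofReal δ * volume (ball y (ρ₂:ℝ)) :=
          hy.1 ρ₂ hρ₂pos hρ₂r
      _ = ENNReal.ofReal δ * (ENNReal.ofReal ((ρ₂:ℝ) ^ n) * μ1) := by
          rw [hballvol y _ (le_of_lt hρ₂pos)]
      _ ≤ ENNReal.ofReal (δ * (2*d)^n) * μ1 := by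
          rw [← mul_assoc, ← ENNReal.ofReal_mul (le_of_lt hδ)]
          apply mul_le_mul_left
          apply ENNReal.ofReal_le_ofReal
          have : (ρ₂:ℝ)^n ≤ (2*d)^n := pow_le_pow_left₀ (le_of_lt hρ₂pos) hρ₂2d n
          nlinarith [le_of_lt hδ]
  have hlt : volume (Bx ∪ By) < volume (ball y d) := by
    calc volume (Bx ∪ By) ≤ volume Bx + volume By := measure_union_le _ _
      _ ≤ ENNReal.ofReal (δ * (3*d)^n) * μ1 + ENNReal.ofReal (δ * (2*d)^n) * μ1 :=
          add_le_add hBxvol hByvol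
      _ = ENNReal.ofReal (δ * (3*d)^n + δ * (2*d)^n) * μ1 := by
          rw [← add_mul, ← ENNReal.ofReal_add] <;> positivity
      _ < ENNReal.ofReal (d ^ n) * μ1 := by
          apply ENNReal.mul_lt_mul_left hμ1pos hμ1top
          apply (ENNReal.ofReal_lt_ofReal_iff (by positivity)).2
          have h3 : (3*d)^n = 3^n * d^n := by rw [mul_pow]
          have h2 : (2*d)^n = 2^n * d^n := by rw [mul_pow]
          rw [h3, h2]
          nlinarith [pow_pos hdpos n]
      _ = volume (ball y d) := (hballvol y d (le_of_lt hdpos)).symm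
  have hne : (ball y d \ (Bx ∪ By)).Nonempty := by
    rw [nonempty_iff_ne_empty]
    intro hempty
    have hsub : ball y d ⊆ Bx ∪ By := by
      intro z hz
      by_contra hzn
      exact (eq_empty_iff_forall_notMem.1 hempty z) ⟨hz, hzn⟩
    exact absurd (measure_mono hsub) (not_le.2 hlt)
  obtain ⟨z, hzball, hznot⟩ := hne
  have hzx : z ∈ ball x (ρ₁:ℝ) := by
    rw [mem_ball] at *
    calc dist z x ≤ dist z y + dist y x := dist_triangle z y x
      _ < d + d := by rw [← hd]; exact add_lt_add_left hzball d
      _ = 2 * d := by ring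
      _ < ρ₁ := hρ₁l
  have hzgoodx : ‖phiB n Φ z - phiB n Φ x - A (z - x)‖ ≤ δ * ‖z - x‖ := by
    by_contra hbad
    exact hznot (Or.inl ⟨not_le.1 hbad, hzx⟩)
  have hzgoody : ‖phiB n Φ z - phiB n Φ y - A (z - y)‖ ≤ δ * ‖z - y‖ := by
    by_contra hbad
    apply hznot
    refine Or.inr ⟨not_le.1 hbad, ?_⟩
    rw [mem_ball]
    exact lt_of_lt_of_le hzball (le_of_lt hρ₂l)
  have hzx2 : ‖z - x‖ < 2 * d := by rw [← dist_eq_norm]; rw [mem_ball] at hzx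
                                    calc dist z x ≤ dist z y + dist y x := dist_triangle z y x
                                      _ < d + d := by rw [← hd]; exact add_lt_add_left hzball d
                                      _ = 2 * d := by ring
  have hzy1 : ‖z - y‖ < d := by rw [← dist_eq_norm]; exact hzball
  have key : ‖phiB n Φ y - phiB n Φ x - A (y - x)‖ ≤ 3 * δ * d := by
    have hAzz : A (z - x) - A (z - y) = A (y - x) := by
      rw [← map_sub]; congr 1; abel
    have halg : phiB n Φ y - phiB n Φ x - A (y - x) =
        (phiB n Φ z - phiB n Φ x - A (z - x)) - (phiB n Φ z - phiB n Φ y - A (z - y)) := by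
      have h2 : (phiB n Φ z - phiB n Φ x - A (z - x)) - (phiB n Φ z - phiB n Φ y - A (z - y)) =
          phiB n Φ y - phiB n Φ x - (A (z - x) - A (z - y)) := by abel
      rw [h2, hAzz]
    calc ‖phiB n Φ y - phiB n Φ x - A (y - x)‖
        = ‖(phiB n Φ z - phiB n Φ x - A (z - x)) - (phiB n Φ z - phiB n Φ y - A (z - y))‖ := by
          rw [halg]
      _ ≤ ‖phiB n Φ z - phiB n Φ x - A (z - x)‖ + ‖phiB n Φ z - phiB n Φ y - A (z - y)‖ :=
          norm_sub_le _ _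
      _ ≤ δ * ‖z - x‖ + δ * ‖z - y‖ := add_le_add hzgoodx hzgoody
      _ ≤ δ * (2*d) + δ * d := by
          exact add_le_add (mul_le_mul_of_nonneg_left (le_of_lt hzx2) (le_of_lt hδ))
            (mul_le_mul_of_nonneg_left (le_of_lt hzy1) (le_of_lt hδ))
      _ = 3 * δ * d := by ring
  have hd' : d = ‖y - x‖ := by rw [hd, dist_eq_norm]
  calc ‖phiB n Φ y - phiB n Φ x - A (y - x)‖ ≤ 3 * δ * d := key
    _ = (Real.toNNReal (3*δ) : ℝ) * ‖y - x‖ := by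
        rw [Real.coe_toNNReal _ (by positivity), hd']

/-! ### Pieces of good sets inside the cube are null -/

lemma piece_null {n : ℕ} (hn : 0 < n) (Φ : Euc n → Euc n)
    (hcont : ContinuousOn Φ (unitCube n))
    (hmp : ∀ A ⊆ unitCube n, MeasurableSet A → volume (Φ '' A) = volume A)
    (A : Euc n →L[ℝ] Euc n) (hdet : |A.det| ≠ 1) :
    ∃ δ : ℝ, 0 < δ ∧ δ ≤ 1 ∧ ∀ r : ℚ, 0 < (r:ℝ) → ∀ c : Euc n,
      volume (GSet n Φ A δ r ∩ ball c ((r:ℝ)/8) ∩ unitCube n) = 0 := by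
  have hΦm := measurable_phiB n Φ hcont
  set δ₀ : ℝ := ((3:ℝ)^n + 2^n + 1)⁻¹ with hδ₀
  have hpows : (0:ℝ) < (3:ℝ)^n + 2^n + 1 := by positivity
  have hδ₀pos : 0 < δ₀ := by positivity
  have hδ₀le : δ₀ ≤ 1 := by
    rw [hδ₀]
    rw [inv_le_one_iff₀]
    right
    have h3 : (1:ℝ) ≤ 3^n := one_le_pow₀ (by norm_num)
    linarith [h3, pow_pos (show (0:ℝ) < 2 by norm_num) n]
  have hδ₀small : ∀ δ ≤ δ₀, δ * ((3:ℝ)^n + 2^n) < 1 := by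
    intro δ hδle
    have h1 : δ * ((3:ℝ)^n + 2^n) ≤ δ₀ * ((3:ℝ)^n + 2^n) := by
      apply mul_le_mul_of_nonneg_right hδle (by positivity)
    have h2 : δ₀ * ((3:ℝ)^n + 2^n) < 1 := by
      rw [hδ₀]
      rw [inv_mul_lt_iff₀ hpows]
      linarith
    linarith
  -- the measure-theoretic part, shared between the two cases
  have hmeas_piece : ∀ (δ : ℝ) (r : ℚ) (c : Euc n),
      MeasurableSet (GSet n Φ A δ r ∩ ball c ((r:ℝ)/8) ∩ unitCube n) :=
    fun δ r c => ((measurableSet_GSet n Φ hΦm A δ r).inter measurableSet_ball).inter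
      (measurableSet_unitCube n)
  have himg_eq : ∀ s ⊆ unitCube n, phiB n Φ '' s = Φ '' s := by
    intro s hs
    exact image_congr (fun a ha => phiB_eq_on n Φ (hs ha))
  rcases hdet.lt_or_gt with hlt | hgt
  · -- |det A| < 1
    set m : ℝ≥0 := Real.toNNReal ((1 + |A.det|)/2) with hm0
    have hmlt : ENNReal.ofReal |A.det| < (m : ℝ≥0∞) := by
      have : ((m : ℝ≥0) : ℝ≥0∞) = ENNReal.ofReal ((1 + |A.det|)/2) := rfl
      rw [this]
      apply (ENNReal.ofReal_lt_ofReal_iff (by positivity)).2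
      linarith
    have hm1 : (m : ℝ≥0∞) < 1 := by
      rw [show ((1:ℝ≥0∞)) = ENNReal.ofReal 1 by simp]
      rw [show ((m : ℝ≥0) : ℝ≥0∞) = ENNReal.ofReal ((1 + |A.det|)/2) from rfl]
      apply (ENNReal.ofReal_lt_ofReal_iff (by norm_num)).2
      linarith
    obtain ⟨δ₁, hδ₁, hδ₁pos⟩ :=
      ((addHaar_image_le_mul_of_det_lt volume A hmlt).and self_mem_nhdsWithin).exists
    set δ : ℝ := min δ₀ ((δ₁:ℝ)/3) with hδdef
    have hδpos : 0 < δ := lt_min hδ₀pos (by positivity)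
    refine ⟨δ, hδpos, le_trans (min_le_left _ _) hδ₀le, ?_⟩
    intro r hr c
    set s := GSet n Φ A δ r ∩ ball c ((r:ℝ)/8) ∩ unitCube n with hs
    have hsub : s ⊆ unitCube n := inter_subset_right
    have halo : ApproximatesLinearOn (phiB n Φ) A s (Real.toNNReal (3*δ)) := by
      apply (approxOn_GSet hn Φ A hδpos (hδ₀small δ (min_le_left _ _)) hr c).mono_set
      exact inter_subset_left
    have halo' : ApproximatesLinearOn (phiB n Φ) A s δ₁ := by
      apply halo.mono_num
      have h3 : 3 * δ ≤ (δ₁:ℝ) := by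
        have : δ ≤ (δ₁:ℝ)/3 := min_le_right _ _
        linarith
      calc Real.toNNReal (3*δ) ≤ Real.toNNReal (δ₁:ℝ) := Real.toNNReal_le_toNNReal h3
        _ = δ₁ := Real.toNNReal_coe
    have himg := hδ₁ s (phiB n Φ) halo'
    rw [himg_eq s hsub, hmp s hsub (hmeas_piece δ r c)] at himg
    by_contra hne
    have hfin : volume s < ∞ :=
      lt_of_le_of_lt (measure_mono hsub) (volume_unitCube_lt_top n)
    have : volume s < volume s := by
      calc volume s ≤ (m : ℝ≥0∞) * volume s := himg
        _ < 1 * volume s := by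
            apply ENNReal.mul_lt_mul_left hne hfin.ne
            exact hm1
        _ = volume s := one_mul _
    exact absurd this (lt_irrefl _)
  · -- 1 < |det A|
    set m : ℝ≥0 := Real.toNNReal ((1 + |A.det|)/2) with hm0
    have hmlt : (m : ℝ≥0∞) < ENNReal.ofReal |A.det| := by
      rw [show ((m : ℝ≥0) : ℝ≥0∞) = ENNReal.ofReal ((1 + |A.det|)/2) from rfl]
      apply (ENNReal.ofReal_lt_ofReal_iff (by linarith)).2
      linarith
    have hm1 : (1:ℝ≥0∞) < (m : ℝ≥0∞) := by
      rw [show ((1:ℝ≥0∞)) = ENNReal.ofReal 1 by simp]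
      rw [show ((m : ℝ≥0) : ℝ≥0∞) = ENNReal.ofReal ((1 + |A.det|)/2) from rfl]
      apply (ENNReal.ofReal_lt_ofReal_iff (by linarith)).2
      linarith
    obtain ⟨δ₁, hδ₁, hδ₁pos⟩ :=
      ((mul_le_addHaar_image_of_lt_det volume A hmlt).and self_mem_nhdsWithin).exists
    set δ : ℝ := min δ₀ ((δ₁:ℝ)/3) with hδdef
    have hδpos : 0 < δ := lt_min hδ₀pos (by positivity)
    refine ⟨δ, hδpos, le_trans (min_le_left _ _) hδ₀le, ?_⟩
    intro r hr c
    set s := GSet n Φ A δ r ∩ ball c ((r:ℝ)/8) ∩ unitCube n with hs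
    have hsub : s ⊆ unitCube n := inter_subset_right
    have halo : ApproximatesLinearOn (phiB n Φ) A s (Real.toNNReal (3*δ)) := by
      apply (approxOn_GSet hn Φ A hδpos (hδ₀small δ (min_le_left _ _)) hr c).mono_set
      exact inter_subset_left
    have halo' : ApproximatesLinearOn (phiB n Φ) A s δ₁ := by
      apply halo.mono_num
      have h3 : 3 * δ ≤ (δ₁:ℝ) := by
        have : δ ≤ (δ₁:ℝ)/3 := min_le_right _ _
        linarith
      calc Real.toNNReal (3*δ) ≤ Real.toNNReal (δ₁:ℝ) := Real.toNNReal_le_toNNReal h3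
        _ = δ₁ := Real.toNNReal_coe
    have himg := hδ₁ s (phiB n Φ) halo'
    rw [himg_eq s hsub, hmp s hsub (hmeas_piece δ r c)] at himg
    by_contra hne
    have hfin : volume s < ∞ :=
      lt_of_le_of_lt (measure_mono hsub) (volume_unitCube_lt_top n)
    have : volume s < volume s := by
      calc volume s = 1 * volume s := (one_mul _).symm
        _ < (m : ℝ≥0∞) * volume s := by
            apply ENNReal.mul_lt_mul_left hne hfin.ne
            exact hm1
        _ ≤ volume s := himg
    exact absurd this (lt_irrefl _)

/-! ### Main theorem -/

theorem stmt2 (n : ℕ) (Φ Ψ : Euc n → Euc n)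
    (hmap : MapsTo Φ (unitCube n) (unitCube n)) (hmap' : MapsTo Ψ (unitCube n) (unitCube n))
    (hcont : ContinuousOn Φ (unitCube n)) (hcont' : ContinuousOn Ψ (unitCube n))
    (hinv : ∀ x ∈ unitCube n, Ψ (Φ x) = x ∧ Φ (Ψ x) = x)
    (hsurj : SurjOn Φ (unitCube n) (unitCube n))
    (hmp : ∀ A ⊆ unitCube n, MeasurableSet A → volume (Φ '' A) = volume A)
    (D : Euc n → (Euc n →L[ℝ] Euc n))
    (hD : ∀ᵐ x ∂(volume.restrict (unitCube n)), HasApproxDerivAt Φ (D x) x) :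
    ∀ᵐ x ∂(volume.restrict (unitCube n)), |(D x).det| = 1 := by
  rcases Nat.eq_zero_or_pos n with rfl | hn
  · -- trivial case `n = 0`
    apply Filter.Eventually.of_forall
    intro x
    have hdet : (D x).det = 1 := by
      apply LinearMap.det_eq_one_of_finrank_eq_zero
      simp [finrank_euclideanSpace_fin]
    rw [hdet]
    norm_num
  -- main case
  rw [ae_iff, Measure.restrict_apply' (measurableSet_unitCube n)]
  have hDnull : volume ({x | ¬ HasApproxDerivAt Φ (D x) x} ∩ unitCube n) = 0 := by
    have := hD
    rw [ae_iff, Measure.restrict_apply' (measurableSet_unitCube n)] at this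
    exact this
  -- choice of the scales for each linear map with non-unit determinant
  have hsel : ∀ A : {A : Euc n →L[ℝ] Euc n // |A.det| ≠ 1}, ∃ δ : ℝ, 0 < δ ∧ δ ≤ 1 ∧
      ∀ r : ℚ, 0 < (r:ℝ) → ∀ c : Euc n,
        volume (GSet n Φ A.1 δ r ∩ ball c ((r:ℝ)/8) ∩ unitCube n) = 0 :=
    fun A => piece_null hn Φ hcont hmp A.1 A.2
  choose δf hpos hle hnull using hsel
  -- countable subcover of the balls around such maps
  obtain ⟨T, hTc, hTU⟩ := TopologicalSpace.isOpen_iUnion_countable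
    (fun A : {A : Euc n →L[ℝ] Euc n // |A.det| ≠ 1} =>
      ball (A.1) (δf A / 2)) (fun A => isOpen_ball)
  obtain ⟨Dd, hDdc, hDdd⟩ := TopologicalSpace.exists_countable_dense (Euc n)
  set Z : Set (Euc n) := ⋃ (A ∈ T), ⋃ (r : {q : ℚ // 0 < (q:ℝ)}), ⋃ (c ∈ Dd),
    (GSet n Φ (A:{A : Euc n →L[ℝ] Euc n // |A.det| ≠ 1}).1 (δf A) r.1 ∩
      ball c ((r.1:ℝ)/8) ∩ unitCube n) with hZ
  have hZnull : volume Z = 0 := by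
    rw [hZ]
    rw [measure_biUnion_null_iff hTc]
    intro A hA
    rw [measure_iUnion_null_iff]
    intro r
    rw [measure_biUnion_null_iff hDdc]
    intro c hc
    exact hnull A r.1 r.2 c
  have hincl : {x | ¬ |(D x).det| = 1} ∩ unitCube n ⊆
      ({x | ¬ HasApproxDerivAt Φ (D x) x} ∩ unitCube n) ∪
      (unitCube n \ interior (unitCube n)) ∪ Z := by
    rintro x ⟨hxdet, hxQ⟩
    by_cases hP : HasApproxDerivAt Φ (D x) x
    swap
    · exact Or.inl (Or.inl ⟨hP, hxQ⟩)
    by_cases hxint : x ∈ interior (unitCube n)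
    swap
    · exact Or.inl (Or.inr ⟨hxQ, hxint⟩)
    right
    -- x is an interior approximate differentiability point with non-unit determinant
    obtain ⟨r0, hr0pos, hr0sub⟩ := Metric.isOpen_iff.1 isOpen_interior x hxint
    have hball : ball x r0 ⊆ unitCube n := hr0sub.trans interior_subset
    have hDx : D x ∈ ⋃ (A : {A : Euc n →L[ℝ] Euc n // |A.det| ≠ 1}),
        ball (A.1) (δf A / 2) := by
      apply mem_iUnion.2
      refine ⟨⟨D x, hxdet⟩, ?_⟩
      exact mem_ball_self (by linarith [hpos ⟨D x, hxdet⟩])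
    rw [← hTU] at hDx
    obtain ⟨A, hAT, hDxA⟩ := mem_iUnion₂.1 hDx
    have hAnorm : ‖A.1 - D x‖ < δf A / 2 := by
      rw [mem_ball, dist_eq_norm] at hDxA
      rw [norm_sub_rev]
      exact hDxA
    obtain ⟨r, hrpos, hxG⟩ := mem_GSet_of_approx hP hr0pos hball A.1
      (hpos A) (hle A) hAnorm
    obtain ⟨c, hcball, hcD⟩ := Metric.dense_iff.1 hDdd x ((r:ℝ)/8) (by linarith)
    have hxball : x ∈ ball c ((r:ℝ)/8) := by
      rw [mem_ball, dist_comm]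
      exact hcball
    rw [hZ]
    apply mem_biUnion hAT
    apply mem_iUnion.2
    refine ⟨⟨r, hrpos⟩, ?_⟩
    apply mem_biUnion hcD
    exact ⟨⟨hxG, hxball⟩, hxQ⟩
  apply measure_mono_null hincl
  apply measure_union_null
  apply measure_union_null hDnull (null_cube_minus_interior n)
  exact hZnull
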